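/- Tail smallness of the modification region: Under the setting of the discrete Itô formula, the quantity Δ₂ = E[|φ(ζ) - φ_δ(ζ)|], where ζ = 1 + h u a + √h u b ξ with ξ standard normal, satisfies Δ₂ ≤ K₆ h^{3/2} u² b² for all sufficiently small h, with K₆ independent of h. In particular, the contribution of |ζ| ≤ δ is O(h^{3/2}). -/
import Mathlib
open MeasureTheory ProbabilityTheory Real

lemma gauss4 : Integrable (fun x : ℝ => x ^ 4) (gaussianReal 0 1) := by
  rw [gaussianReal_of_var_ne_zero 0 one_ne_zero,
    integrable_withDensity_iff (measurable_gaussianPDF 0 1)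
      (ae_of_all _ fun x => ENNReal.ofReal_lt_top)]
  have h1 : Integrable (fun x : ℝ => x ^ ((4 : ℕ) : ℝ) * Real.exp (-(1/2) * x ^ 2)) :=
    integrable_rpow_mul_exp_neg_mul_sq (by norm_num) (by norm_num)
  have h2 : Integrable (fun x : ℝ => x ^ (4 : ℕ) * Real.exp (-(1/2) * x ^ 2)) := by
    refine h1.congr ?_
    filter_upwards with x
    rw [Real.rpow_natCast]
  refine (h2.const_mul ((Real.sqrt (2 * π))⁻¹)).congr ?_
  filter_upwards with x
  rw [gaussianPDF_def, ENNReal.toReal_ofReal (gaussianPDFReal_nonneg _ _ _),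
    gaussianPDFReal_def]
  push_cast
  ring_nf

theorem stmt8 {Ω : Type*} [MeasureSpace Ω] [IsProbabilityMeasure (ℙ : Measure Ω)]
    (ξ : Ω → ℝ) (hξ : Measurable ξ)
    (hgauss : Measure.map ξ ℙ = gaussianReal 0 1)
    (φ φδ : ℝ → ℝ) (δ K : ℝ) (hδ : δ ∈ Set.Ioo (0 : ℝ) 1) (hK : 0 < K)
    (heq : ∀ s : ℝ, s ∉ Set.Ioo (-δ) δ → φδ s = φ s)
    (hclose : ∀ s ∈ Set.Ioo (-δ) δ, |φδ s - φ s| < K)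
    (abar ahat bbar bhat ubar uhat : ℝ)
    (habar : 0 < abar) (hbbar : 0 < bbar) (hubar : 0 < ubar) :
    ∃ h₀ > (0 : ℝ), ∃ K₆ > (0 : ℝ), ∀ h : ℝ, 0 < h → h ≤ h₀ →
      ∀ u a b : ℝ,
        abar ≤ |a| → |a| ≤ ahat → bbar ≤ |b| → |b| ≤ bhat →
        ubar ≤ |u| → |u| ≤ uhat →
        (∫ ω, |φ (1 + h * u * a + Real.sqrt h * u * b * ξ ω)
            - φδ (1 + h * u * a + Real.sqrt h * u * b * ξ ω)| ∂ℙ)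
          ≤ K₆ * h ^ ((3 : ℝ) / 2) * u ^ 2 * b ^ 2 := by
  obtain ⟨hδ0, hδ1⟩ := hδ
  set ε := (1 - δ) / 2 with hεdef
  have hε0 : 0 < ε := by simp only [hεdef]; linarith
  set M := ∫ x, x ^ 4 ∂(gaussianReal 0 1) with hMdef
  have hM0 : 0 ≤ M := integral_nonneg fun x => by positivity
  have hξ4 : Integrable (fun ω => ξ ω ^ 4) ℙ := by
    have := (integrable_map_measure
      (by exact (measurable_id.pow_const 4).aestronglyMeasurable) hξ.aemeasurable).mp
      (by rw [hgauss]; exact gauss4)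
    exact this
  have hEξ4 : ∫ ω, ξ ω ^ 4 ∂ℙ = M := by
    rw [hMdef, ← hgauss, integral_map hξ.aemeasurable
      (by exact (measurable_id.pow_const 4).aestronglyMeasurable)]
  set U := max uhat 1 with hU
  set B := max bhat 1 with hB
  have hU0 : (0:ℝ) < U := lt_of_lt_of_le one_pos (le_max_right _ _)
  have hB0 : (0:ℝ) < B := lt_of_lt_of_le one_pos (le_max_right _ _)
  refine ⟨min 1 (ε / max (uhat * ahat) 1), by positivity,
    K * (M + 1) * U ^ 2 * B ^ 2 / ε ^ 4, by positivity, ?_⟩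
  intro h hh hh0 u a b ha1 ha2 hb1 hb2 hu1 hu2
  have hh1 : h ≤ 1 := le_trans hh0 (min_le_left _ _)
  have hmax0 : (0:ℝ) < max (uhat * ahat) 1 := lt_of_lt_of_le one_pos (le_max_right _ _)
  have hua : h * |u * a| ≤ ε := by
    have h1 : |u * a| ≤ max (uhat * ahat) 1 := by
      rw [abs_mul]
      calc |u| * |a| ≤ uhat * ahat := by
            apply mul_le_mul hu2 ha2 (abs_nonneg _) (le_trans (abs_nonneg _) hu2)
        _ ≤ _ := le_max_left _ _
    have h2 : h ≤ ε / max (uhat * ahat) 1 := le_trans hh0 (min_le_right _ _)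
    calc h * |u * a| ≤ (ε / max (uhat * ahat) 1) * max (uhat * ahat) 1 :=
          mul_le_mul h2 h1 (abs_nonneg _) (by positivity)
      _ = ε := by field_simp
  set c := Real.sqrt h * |u * b| / ε with hc
  have hc0 : 0 ≤ c := by positivity
  have key : ∀ ω, |φ (1 + h * u * a + Real.sqrt h * u * b * ξ ω)
      - φδ (1 + h * u * a + Real.sqrt h * u * b * ξ ω)| ≤ K * c ^ 4 * ξ ω ^ 4 := by
    intro ω
    set ζ := 1 + h * u * a + Real.sqrt h * u * b * ξ ω with hζ
    by_cases hmem : ζ ∈ Set.Ioo (-δ) δ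
    · have h1 : |φ ζ - φδ ζ| ≤ K := by
        rw [abs_sub_comm]; exact le_of_lt (hclose _ hmem)
      have habs : ε ≤ |Real.sqrt h * u * b * ξ ω| := by
        have e1 : Real.sqrt h * u * b * ξ ω = ζ - (1 + h * u * a) := by rw [hζ]; ring
        have e2 : |1 + h * u * a| - |ζ| ≤ |1 + h * u * a - ζ| := abs_sub_abs_le_abs_sub _ _
        have e3 : |ζ| ≤ δ := le_of_lt (abs_lt.mpr ⟨hmem.1, hmem.2⟩)
        have e4 : 1 - |h * u * a| ≤ |1 + h * u * a| := by
          have := abs_sub_abs_le_abs_sub (1 : ℝ) (-(h * u * a))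
          simp only [abs_one, abs_neg, sub_neg_eq_add] at this
          linarith
        have e5 : |h * u * a| ≤ ε := by
          rw [mul_assoc, abs_mul, abs_of_pos hh]
          exact hua
        have e6 : 1 - 2 * ε = δ := by rw [hεdef]; ring
        calc ε = 1 - ε - δ := by rw [hεdef]; ring
          _ ≤ |1 + h * u * a| - |ζ| := by linarith
          _ ≤ |1 + h * u * a - ζ| := e2
          _ = |Real.sqrt h * u * b * ξ ω| := by rw [e1, abs_sub_comm]
      have h2 : 1 ≤ c * |ξ ω| := by
        rw [hc, div_mul_eq_mul_div, le_div_iff₀ hε0, one_mul]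
        calc ε ≤ |Real.sqrt h * u * b * ξ ω| := habs
          _ = Real.sqrt h * |u * b| * |ξ ω| := by
            rw [abs_mul, abs_mul, abs_mul, abs_of_nonneg (Real.sqrt_nonneg h)]
            ring_nf
            rw [abs_mul]
            ring
      have h3 : 1 ≤ c ^ 4 * ξ ω ^ 4 := by
        calc (1:ℝ) = 1 ^ 4 := by norm_num
          _ ≤ (c * |ξ ω|) ^ 4 := by
            apply pow_le_pow_left₀ (by norm_num) h2
          _ = c ^ 4 * ξ ω ^ 4 := by
            rw [mul_pow, ← abs_pow, abs_of_nonneg (by positivity : (0:ℝ) ≤ ξ ω ^ 4)]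
      calc |φ ζ - φδ ζ| ≤ K := h1
        _ = K * 1 := (mul_one K).symm
        _ ≤ K * (c ^ 4 * ξ ω ^ 4) := by
          exact mul_le_mul_of_nonneg_left h3 (le_of_lt hK)
        _ = K * c ^ 4 * ξ ω ^ 4 := by ring
    · rw [heq _ hmem]
      simp only [sub_self, abs_zero]
      positivity
  have hint : Integrable (fun ω => K * c ^ 4 * ξ ω ^ 4) ℙ := hξ4.const_mul _
  have step : (∫ ω, |φ (1 + h * u * a + Real.sqrt h * u * b * ξ ω)
      - φδ (1 + h * u * a + Real.sqrt h * u * b * ξ ω)| ∂ℙ)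
      ≤ ∫ ω, K * c ^ 4 * ξ ω ^ 4 ∂ℙ :=
    integral_mono_of_nonneg (ae_of_all _ fun ω => abs_nonneg _) hint (ae_of_all _ key)
  rw [integral_const_mul, hEξ4] at step
  refine le_trans step ?_
  -- now the purely numeric bound
  have hc4 : c ^ 4 = h ^ 2 * (u * b) ^ 4 / ε ^ 4 := by
    rw [hc, div_pow, mul_pow, ← abs_pow, abs_of_nonneg (by positivity : (0:ℝ) ≤ (u*b)^4)]
    rw [show (Real.sqrt h) ^ 4 = ((Real.sqrt h) ^ 2) ^ 2 by ring, Real.sq_sqrt hh.le]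
  have hrw : h ^ 2 = h ^ ((1:ℝ)/2) * h ^ ((3:ℝ)/2) := by
    rw [← Real.rpow_add hh]
    norm_num
  have hhalf : h ^ ((1:ℝ)/2) ≤ 1 := Real.rpow_le_one hh.le hh1 (by norm_num)
  have hu2 : u ^ 2 ≤ U ^ 2 := by
    rw [← sq_abs]
    apply pow_le_pow_left₀ (abs_nonneg _) (le_trans hu2 (le_max_left _ _))
  have hb2' : b ^ 2 ≤ B ^ 2 := by
    rw [← sq_abs]
    apply pow_le_pow_left₀ (abs_nonneg _) (le_trans hb2 (le_max_left _ _))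
  have h32 : (0:ℝ) ≤ h ^ ((3:ℝ)/2) := Real.rpow_nonneg hh.le _
  have key2 : h ^ 2 * (u * b) ^ 4 ≤ h ^ ((3:ℝ)/2) * u ^ 2 * b ^ 2 * (U ^ 2 * B ^ 2) := by
    have e1 : h ^ 2 * (u * b) ^ 4
        = (h ^ ((1:ℝ)/2) * u ^ 2 * b ^ 2) * (h ^ ((3:ℝ)/2) * u ^ 2 * b ^ 2) := by
      rw [hrw]; ring
    rw [e1]
    have e2 : h ^ ((1:ℝ)/2) * u ^ 2 * b ^ 2 ≤ 1 * U ^ 2 * B ^ 2 := by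
      apply mul_le_mul (mul_le_mul hhalf hu2 (by positivity) (by norm_num)) hb2'
        (by positivity) (by positivity)
    calc (h ^ ((1:ℝ)/2) * u ^ 2 * b ^ 2) * (h ^ ((3:ℝ)/2) * u ^ 2 * b ^ 2)
        ≤ (1 * U ^ 2 * B ^ 2) * (h ^ ((3:ℝ)/2) * u ^ 2 * b ^ 2) := by
          apply mul_le_mul_of_nonneg_right e2 (by positivity)
      _ = h ^ ((3:ℝ)/2) * u ^ 2 * b ^ 2 * (U ^ 2 * B ^ 2) := by ring
  rw [hc4]
  rw [show K * (h ^ 2 * (u * b) ^ 4 / ε ^ 4) * M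
      = (K * M / ε ^ 4) * (h ^ 2 * (u * b) ^ 4) by ring]
  calc (K * M / ε ^ 4) * (h ^ 2 * (u * b) ^ 4)
      ≤ (K * (M + 1) / ε ^ 4) * (h ^ ((3:ℝ)/2) * u ^ 2 * b ^ 2 * (U ^ 2 * B ^ 2)) := by
        apply mul_le_mul
        · apply div_le_div_of_nonneg_right ?_ (by positivity)
          nlinarith [hM0, hK.le]
        · exact key2
        · positivity
        · positivity
      _ = K * (M + 1) * U ^ 2 * B ^ 2 / ε ^ 4 * h ^ ((3:ℝ)/2) * u ^ 2 * b ^ 2 := by ring
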